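/- Every labeled graph containing four vertices a < b < c < d whose induced subgraph has exactly the edges ad and bc (an induced copy of Q_4 in reduced form) is not 12-representable. -/
import Mathlib


/-- Some occurrence of `i` comes strictly before some occurrence of `j` in `w`. -/
def Occ {n : ℕ} (w : List (Fin n)) (i j : Fin n) : Prop :=
  ∃ p q : Fin w.length, p < q ∧ w.get p = i ∧ w.get q = j

/-- The word `w` over `[n]` 12-represents the labeled graph `G` on `Fin n`:
every letter occurs at least once, and for `i < j`, `i` and `j` are adjacent
iff no occurrence of `i` comes before any occurrence of `j`. -/
def Represents {n : ℕ} (G : SimpleGraph (Fin n)) (w : List (Fin n)) : Prop :=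
  (∀ v : Fin n, v ∈ w) ∧ ∀ i j : Fin n, i < j → (G.Adj i j ↔ ¬ Occ w i j)

/-- `b` is a bad vertex of `G`. -/
def Bad {n : ℕ} (G : SimpleGraph (Fin n)) (b : Fin n) : Prop :=
  ∃ a c : Fin n, a < b ∧ b < c ∧ ¬ G.Adj a b ∧ ¬ G.Adj b c ∧ G.Adj a c

theorem stmt11 (n : ℕ) (G : SimpleGraph (Fin n)) (a b c d : Fin n)
    (hab : a < b) (hbc : b < c) (hcd : c < d)
    (e1 : G.Adj a d) (e2 : G.Adj b c)
    (e3 : ¬ G.Adj a b) (e4 : ¬ G.Adj a c) (e5 : ¬ G.Adj b d) (e6 : ¬ G.Adj c d) :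
    ¬ ∃ w : List (Fin n), Represents G w := by
  rintro ⟨w, hmem, hrep⟩
  have had : ¬ Occ w a d := (hrep a d (hab.trans (hbc.trans hcd))).mp e1
  have hbc' : ¬ Occ w b c := (hrep b c hbc).mp e2
  have oac : Occ w a c := by
    by_contra h; exact e4 ((hrep a c (hab.trans hbc)).mpr h)
  have obd : Occ w b d := by
    by_contra h; exact e5 ((hrep b d (hbc.trans hcd)).mpr h)
  obtain ⟨ra, rc, h1, ha, hc⟩ := oac
  obtain ⟨qb, qd, h2, hb, hd⟩ := obd
  have h3 : qd < ra := by
    rcases lt_trichotomy ra qd with h | h | h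
    · exact absurd ⟨ra, qd, h, ha, hd⟩ had
    · have : a = d := by rw [← ha, h, hd]
      exact absurd this (ne_of_lt (hab.trans (hbc.trans hcd)))
    · exact h
  have h4 : rc < qb := by
    rcases lt_trichotomy qb rc with h | h | h
    · exact absurd ⟨qb, rc, h, hb, hc⟩ hbc'
    · have : b = c := by rw [← hb, h, hc]
      exact absurd this (ne_of_lt hbc)
    · exact h
  exact absurd ((h1.trans h4).trans (h2.trans h3)) (lt_irrefl ra)
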